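/- Let G be a graph with Δ(G) ≥ 6 and L a list assignment with |L(v)| ≥ Δ(G) + 3. Suppose u is a vertex of degree 3 with exactly two degree-2 neighbors v, w, and the 1-path u–w–x ends at a vertex x with d(x) ≤ Δ(G) − 1. If G − {u, v, w} has a 2-distance L-coloring, then G has one, obtained by coloring u, then v, then w. -/
import Mathlib


open SimpleGraph

/-- Maximum average degree: the supremum over all nonempty subgraphs `H` of `2|E(H)|/|V(H)|`. -/
noncomputable def mad {V : Type} [Fintype V] (G : SimpleGraph V) : ℝ :=
  sSup {x : ℝ | ∃ H : G.Subgraph, H.verts.Nonempty ∧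
    x = 2 * H.edgeSet.ncard / H.verts.ncard}

/-- Two distinct vertices are at distance at most 2. -/
def TwoDistAdj {V : Type} (G : SimpleGraph V) (u v : V) : Prop :=
  u ≠ v ∧ (G.Adj u v ∨ ∃ w, G.Adj u w ∧ G.Adj w v)

/-- `φ` is a 2-distance coloring of `G` from the lists `L`: each vertex gets a color from
its list and vertices at distance at most 2 get distinct colors. -/
def IsTwoDistListColoring {V : Type} (G : SimpleGraph V) (L : V → Finset ℕ) (φ : V → ℕ) :
    Prop :=
  (∀ v, φ v ∈ L v) ∧ ∀ u v, TwoDistAdj G u v → φ u ≠ φ v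

/-- If `Δ(G) ≥ 6`, lists have size at least `Δ(G) + 3`, `u` is a 3-vertex with exactly
two degree-2 neighbors `v, w`, and the 1-path `u–w–x` ends at `x` with
`d(x) ≤ Δ(G) − 1`, then any 2-distance list coloring of `G − {u, v, w}` extends to `G`. -/
lemma TwoDistAdj.symm' {V : Type} {G : SimpleGraph V} {a b : V} (h : TwoDistAdj G a b) :
    TwoDistAdj G b a := by
  obtain ⟨hne, h | ⟨m, h1, h2⟩⟩ := h
  · exact ⟨hne.symm, Or.inl h.symm⟩
  · exact ⟨hne.symm, Or.inr ⟨m, h2.symm, h1.symm⟩⟩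

theorem extend_coloring_110_vertex
    {V : Type} [Fintype V] [DecidableEq V] (G : SimpleGraph V) [DecidableRel G.Adj]
    (hΔ : 6 ≤ G.maxDegree)
    (L : V → Finset ℕ) (hL : ∀ y, G.maxDegree + 3 ≤ (L y).card)
    (u v w x : V) (hdu : G.degree u = 3)
    (huv : G.Adj u v) (huw : G.Adj u w) (hvw : v ≠ w)
    (hdv : G.degree v = 2) (hdw : G.degree w = 2)
    (hexact : ((G.neighborFinset u).filter fun y => G.degree y = 2).card = 2)
    (hwx : G.Adj w x) (hxu : x ≠ u) (hdx : G.degree x ≤ G.maxDegree - 1)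
    (hcol : ∃ φ, IsTwoDistListColoring (G.induce {y | y ≠ u ∧ y ≠ v ∧ y ≠ w})
      (fun y => L y.1) φ) :
    ∃ φ : V → ℕ, IsTwoDistListColoring G L φ := by
  classical
  set Δ := G.maxDegree with hΔdef
  -- the third neighbor t of u
  have hvwsub : ({v, w} : Finset V) ⊆ G.neighborFinset u := by
    intro y hy
    rw [Finset.mem_insert, Finset.mem_singleton] at hy
    rcases hy with rfl | rfl
    · rwa [mem_neighborFinset]
    · rwa [mem_neighborFinset]
  have hvwcard : ({v, w} : Finset V).card = 2 := by
    rw [Finset.card_insert_of_notMem (by simp [hvw]), Finset.card_singleton]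
  have hT : (G.neighborFinset u \ {v, w}).card = 1 := by
    rw [Finset.card_sdiff_of_subset hvwsub, hvwcard]
    have : (G.neighborFinset u).card = 3 := hdu
    omega
  obtain ⟨t, ht⟩ := Finset.card_eq_one.mp hT
  have htmem : t ∈ G.neighborFinset u \ ({v, w} : Finset V) := ht ▸ Finset.mem_singleton_self t
  have hut : G.Adj u t := by
    rw [← mem_neighborFinset]; exact (Finset.mem_sdiff.mp htmem).1
  have htv : t ≠ v := by
    have := (Finset.mem_sdiff.mp htmem).2; simp at this; exact this.1
  have htw : t ≠ w := by
    have := (Finset.mem_sdiff.mp htmem).2; simp at this; exact this.2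
  have hNu : ∀ y, G.Adj u y ↔ (y = v ∨ y = w ∨ y = t) := by
    intro y
    constructor
    · intro h
      by_cases h1 : y = v
      · exact Or.inl h1
      by_cases h2 : y = w
      · exact Or.inr (Or.inl h2)
      refine Or.inr (Or.inr ?_)
      have : y ∈ G.neighborFinset u \ ({v, w} : Finset V) := by
        simp [mem_neighborFinset, h, h1, h2]
      rw [ht] at this; simpa using this
    · rintro (rfl | rfl | rfl)
      exacts [huv, huw, hut]
  -- the other neighbor z of v
  have husubv : ({u} : Finset V) ⊆ G.neighborFinset v := by
    simp [mem_neighborFinset, huv.symm]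
  have hZ : (G.neighborFinset v \ {u}).card = 1 := by
    rw [Finset.card_sdiff_of_subset husubv, Finset.card_singleton]
    have : (G.neighborFinset v).card = 2 := hdv
    omega
  obtain ⟨z, hz⟩ := Finset.card_eq_one.mp hZ
  have hzmem : z ∈ G.neighborFinset v \ ({u} : Finset V) := hz ▸ Finset.mem_singleton_self z
  have hvz : G.Adj v z := by
    rw [← mem_neighborFinset]; exact (Finset.mem_sdiff.mp hzmem).1
  have hzu : z ≠ u := by
    have := (Finset.mem_sdiff.mp hzmem).2; simpa using this
  have hNv : ∀ y, G.Adj v y ↔ (y = u ∨ y = z) := by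
    intro y
    constructor
    · intro h
      by_cases h1 : y = u
      · exact Or.inl h1
      refine Or.inr ?_
      have : y ∈ G.neighborFinset v \ ({u} : Finset V) := by
        simp [mem_neighborFinset, h, h1]
      rw [hz] at this; simpa using this
    · rintro (rfl | rfl)
      exacts [huv.symm, hvz]
  -- neighbors of w are exactly u and x
  have hNwset : G.neighborFinset w = {u, x} := by
    apply Finset.eq_of_subset_of_card_le
    · intro y hy
      rw [Finset.mem_insert, Finset.mem_singleton]
      by_contra hc
      push_neg at hc
      have hsub : ({u, x, y} : Finset V) ⊆ G.neighborFinset w := by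
        intro a ha
        simp only [Finset.mem_insert, Finset.mem_singleton] at ha
        rcases ha with rfl | rfl | rfl
        · rw [mem_neighborFinset]; exact huw.symm
        · rw [mem_neighborFinset]; exact hwx
        · exact hy
      have hc3 : ({u, x, y} : Finset V).card = 3 := by
        rw [Finset.card_insert_of_notMem (by simp [hxu.symm, Ne.symm hc.1]),
          Finset.card_insert_of_notMem (by simp [Ne.symm hc.2]), Finset.card_singleton]
      have := Finset.card_le_card hsub
      rw [hc3] at this
      have : (G.neighborFinset w).card = 2 := hdw
      omega
    · have h2 : (G.neighborFinset w).card = 2 := hdw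
      have hux : u ≠ x := hxu.symm
      have : ({u, x} : Finset V).card = 2 := by
        rw [Finset.card_insert_of_notMem (by simp [hux]), Finset.card_singleton]
      omega
  have hNw : ∀ y, G.Adj w y ↔ (y = u ∨ y = x) := by
    intro y
    rw [← mem_neighborFinset, hNwset]
    simp
  -- degree bounds
  have hdt : G.degree t ≤ Δ := G.degree_le_maxDegree t
  have hdz : G.degree z ≤ Δ := G.degree_le_maxDegree z
  -- the partial coloring
  obtain ⟨φ, hφ1, hφ2⟩ := hcol
  let ψ : V → ℕ := fun y => if h : y ≠ u ∧ y ≠ v ∧ y ≠ w then φ ⟨y, h⟩ else 0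
  have hψ : ∀ y (h : y ≠ u ∧ y ≠ v ∧ y ≠ w), ψ y = φ ⟨y, h⟩ := by
    intro y h; simp only [ψ, dif_pos h]
  -- forbidden sets
  let Du : Finset V := Finset.univ.filter (fun y => y ≠ u ∧ y ≠ v ∧ y ≠ w ∧ TwoDistAdj G u y)
  let Dv : Finset V := Finset.univ.filter (fun y => y ≠ u ∧ y ≠ v ∧ y ≠ w ∧ TwoDistAdj G v y)
  let Dw : Finset V := Finset.univ.filter (fun y => y ≠ u ∧ y ≠ v ∧ y ≠ w ∧ TwoDistAdj G w y)
  -- cardinality of sdiffs of neighborhoods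
  have hNt : (G.neighborFinset t \ {u}).card ≤ Δ - 1 := by
    have hsub : ({u} : Finset V) ⊆ G.neighborFinset t := by
      simp [mem_neighborFinset, hut.symm]
    rw [Finset.card_sdiff_of_subset hsub, Finset.card_singleton]
    have : (G.neighborFinset t).card = G.degree t := rfl
    omega
  have hNz : (G.neighborFinset z \ {v}).card ≤ Δ - 1 := by
    have hsub : ({v} : Finset V) ⊆ G.neighborFinset z := by
      simp [mem_neighborFinset, hvz.symm]
    rw [Finset.card_sdiff_of_subset hsub, Finset.card_singleton]
    have : (G.neighborFinset z).card = G.degree z := rfl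
    omega
  have hNx : (G.neighborFinset x \ {w}).card ≤ Δ - 2 := by
    have hsub : ({w} : Finset V) ⊆ G.neighborFinset x := by
      simp [mem_neighborFinset, hwx.symm]
    rw [Finset.card_sdiff_of_subset hsub, Finset.card_singleton]
    have h1 : (G.neighborFinset x).card = G.degree x := rfl
    omega
  -- bounds on Du, Dv, Dw
  have hDu : Du.card ≤ Δ + 2 := by
    have hsub : Du ⊆ insert t (insert z (insert x (G.neighborFinset t \ {u}))) := by
      intro y hy
      simp only [Du, Finset.mem_filter] at hy
      obtain ⟨-, hyu, hyv, hyw, -, hadj | ⟨m, h1, h2⟩⟩ := hy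
      · rcases (hNu y).mp hadj with rfl | rfl | rfl
        · exact absurd rfl hyv
        · exact absurd rfl hyw
        · simp
      · rcases (hNu m).mp h1 with rfl | rfl | rfl
        · rcases (hNv y).mp h2 with rfl | rfl
          · exact absurd rfl hyu
          · simp
        · rcases (hNw y).mp h2 with rfl | rfl
          · exact absurd rfl hyu
          · simp
        · have hmem : y ∈ G.neighborFinset m \ {u} := by
            simp [mem_neighborFinset, h2, hyu]
          simp [hmem]
    have e1 := Finset.card_insert_le x (G.neighborFinset t \ {u})
    have e2 := Finset.card_insert_le z (insert x (G.neighborFinset t \ {u}))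
    have e3 := Finset.card_insert_le t (insert z (insert x (G.neighborFinset t \ {u})))
    have e0 := Finset.card_le_card hsub
    omega
  have hDv : Dv.card ≤ Δ + 1 := by
    have hsub : Dv ⊆ insert z (insert t (G.neighborFinset z \ {v})) := by
      intro y hy
      simp only [Dv, Finset.mem_filter] at hy
      obtain ⟨-, hyu, hyv, hyw, -, hadj | ⟨m, h1, h2⟩⟩ := hy
      · rcases (hNv y).mp hadj with rfl | rfl
        · exact absurd rfl hyu
        · simp
      · rcases (hNv m).mp h1 with rfl | rfl
        · rcases (hNu y).mp h2 with rfl | rfl | rfl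
          · exact absurd rfl hyv
          · exact absurd rfl hyw
          · simp
        · have hmem : y ∈ G.neighborFinset m \ {v} := by
            simp [mem_neighborFinset, h2, hyv]
          simp [hmem]
    have e1 := Finset.card_insert_le t (G.neighborFinset z \ {v})
    have e2 := Finset.card_insert_le z (insert t (G.neighborFinset z \ {v}))
    have e0 := Finset.card_le_card hsub
    omega
  have hDw : Dw.card ≤ Δ := by
    have hsub : Dw ⊆ insert x (insert t (G.neighborFinset x \ {w})) := by
      intro y hy
      simp only [Dw, Finset.mem_filter] at hy
      obtain ⟨-, hyu, hyv, hyw, -, hadj | ⟨m, h1, h2⟩⟩ := hy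
      · rcases (hNw y).mp hadj with rfl | rfl
        · exact absurd rfl hyu
        · simp
      · rcases (hNw m).mp h1 with rfl | rfl
        · rcases (hNu y).mp h2 with rfl | rfl | rfl
          · exact absurd rfl hyv
          · exact absurd rfl hyw
          · simp
        · have hmem : y ∈ G.neighborFinset m \ {w} := by
            simp [mem_neighborFinset, h2, hyw]
          simp [hmem]
    have e1 := Finset.card_insert_le t (G.neighborFinset x \ {w})
    have e2 := Finset.card_insert_le x (insert t (G.neighborFinset x \ {w}))
    have e0 := Finset.card_le_card hsub
    omega
  -- choose colors
  have pick : ∀ (y : V) (F : Finset ℕ), F.card ≤ Δ + 2 → ∃ c, c ∈ L y \ F := by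
    intro y F hF
    have : (L y \ F).Nonempty := by
      rw [Finset.sdiff_nonempty]
      intro hsubs
      have := Finset.card_le_card hsubs
      have := hL y
      omega
    exact this
  obtain ⟨cu, hcu⟩ := pick u (Du.image ψ) ((Finset.card_image_le).trans (by omega))
  obtain ⟨cv, hcv⟩ := pick v (insert cu (Dv.image ψ))
    ((Finset.card_insert_le _ _).trans (by have := Finset.card_image_le (s := Dv) (f := ψ); omega))
  obtain ⟨cw, hcw⟩ := pick w (insert cu (insert cv (Dw.image ψ)))
    (by
      refine (Finset.card_insert_le _ _).trans ?_
      have h1 := Finset.card_insert_le cv (Dw.image ψ)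
      have h2 := Finset.card_image_le (s := Dw) (f := ψ)
      omega)
  rw [Finset.mem_sdiff] at hcu hcv hcw
  simp only [Finset.mem_insert, not_or] at hcv hcw
  -- the extended coloring
  have huv' : u ≠ v := huv.ne
  have huw' : u ≠ w := huw.ne
  let c : V → ℕ := fun y => if y = u then cu else if y = v then cv else if y = w then cw else ψ y
  have hcuval : c u = cu := by simp [c]
  have hcvval : c v = cv := by simp [c, Ne.symm huv']
  have hcwval : c w = cw := by simp [c, Ne.symm huw', Ne.symm hvw]
  have hcval : ∀ y, y ≠ u → y ≠ v → y ≠ w → c y = ψ y := by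
    intro y h1 h2 h3; simp [c, h1, h2, h3]
  -- key inequalities
  have keyu : ∀ b, b ≠ u → b ≠ v → b ≠ w → TwoDistAdj G u b → cu ≠ ψ b := by
    intro b h1 h2 h3 hadj heq
    exact hcu.2 (heq ▸ Finset.mem_image_of_mem ψ (by simp [Du, h1, h2, h3, hadj]))
  have keyv : ∀ b, b ≠ u → b ≠ v → b ≠ w → TwoDistAdj G v b → cv ≠ ψ b := by
    intro b h1 h2 h3 hadj heq
    exact hcv.2.2 (heq ▸ Finset.mem_image_of_mem ψ (by simp [Dv, h1, h2, h3, hadj]))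
  have keyw : ∀ b, b ≠ u → b ≠ v → b ≠ w → TwoDistAdj G w b → cw ≠ ψ b := by
    intro b h1 h2 h3 hadj heq
    exact hcw.2.2.2 (heq ▸ Finset.mem_image_of_mem ψ (by simp [Dw, h1, h2, h3, hadj]))
  have keyS : ∀ a b, (a ≠ u ∧ a ≠ v ∧ a ≠ w) → (b ≠ u ∧ b ≠ v ∧ b ≠ w) →
      TwoDistAdj G a b → ψ a ≠ ψ b := by
    rintro a b ha hb ⟨hne, hadj | ⟨m, h1, h2⟩⟩
    · rw [hψ a ha, hψ b hb]
      exact hφ2 ⟨a, ha⟩ ⟨b, hb⟩ ⟨fun hh => hne (congrArg Subtype.val hh), Or.inl hadj⟩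
    · rw [hψ a ha, hψ b hb]
      by_cases hm : m ≠ u ∧ m ≠ v ∧ m ≠ w
      · exact hφ2 ⟨a, ha⟩ ⟨b, hb⟩ ⟨fun hh => hne (congrArg Subtype.val hh),
          Or.inr ⟨⟨m, hm⟩, h1, h2⟩⟩
      · exfalso
        simp only [not_and_or, not_not] at hm
        rcases hm with rfl | rfl | rfl
        · rcases (hNu a).mp h1.symm with rfl | rfl | rfl
          · exact ha.2.1 rfl
          · exact ha.2.2 rfl
          · rcases (hNu b).mp h2 with rfl | rfl | rfl
            · exact hb.2.1 rfl
            · exact hb.2.2 rfl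
            · exact hne rfl
        · rcases (hNv a).mp h1.symm with rfl | rfl
          · exact ha.1 rfl
          · rcases (hNv b).mp h2 with rfl | rfl
            · exact hb.1 rfl
            · exact hne rfl
        · rcases (hNw a).mp h1.symm with rfl | rfl
          · exact ha.1 rfl
          · rcases (hNw b).mp h2 with rfl | rfl
            · exact hb.1 rfl
            · exact hne rfl
  refine ⟨c, ?_, ?_⟩
  · intro y
    by_cases h1 : y = u
    · subst h1; rw [hcuval]; exact hcu.1
    by_cases h2 : y = v
    · subst h2; rw [hcvval]; exact hcv.1
    by_cases h3 : y = w
    · subst h3; rw [hcwval]; exact hcw.1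
    · rw [hcval y h1 h2 h3, hψ y ⟨h1, h2, h3⟩]
      exact hφ1 ⟨y, h1, h2, h3⟩
  · intro a b hadj
    have hne : a ≠ b := hadj.1
    by_cases ha1 : a = u
    · subst ha1
      rw [hcuval]
      by_cases hb2 : b = v
      · subst hb2; rw [hcvval]; exact fun hh => hcv.2.1 hh.symm
      by_cases hb3 : b = w
      · subst hb3; rw [hcwval]; exact fun hh => hcw.2.1 hh.symm
      · rw [hcval b (Ne.symm hne) hb2 hb3]
        exact keyu b (Ne.symm hne) hb2 hb3 hadj
    by_cases ha2 : a = v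
    · subst ha2
      rw [hcvval]
      by_cases hb1 : b = u
      · subst hb1; rw [hcuval]; exact hcv.2.1
      by_cases hb3 : b = w
      · subst hb3; rw [hcwval]; exact fun hh => hcw.2.2.1 hh.symm
      · rw [hcval b hb1 (Ne.symm hne) hb3]
        exact keyv b hb1 (Ne.symm hne) hb3 hadj
    by_cases ha3 : a = w
    · subst ha3
      rw [hcwval]
      by_cases hb1 : b = u
      · subst hb1; rw [hcuval]; exact hcw.2.1
      by_cases hb2 : b = v
      · subst hb2; rw [hcvval]; exact hcw.2.2.1
      · rw [hcval b hb1 hb2 (Ne.symm hne)]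
        exact keyw b hb1 hb2 (Ne.symm hne) hadj
    -- a is an old vertex
    rw [hcval a ha1 ha2 ha3]
    by_cases hb1 : b = u
    · subst hb1; rw [hcuval]
      exact fun hh => keyu a ha1 ha2 ha3 hadj.symm' hh.symm
    by_cases hb2 : b = v
    · subst hb2; rw [hcvval]
      exact fun hh => keyv a ha1 ha2 ha3 hadj.symm' hh.symm
    by_cases hb3 : b = w
    · subst hb3; rw [hcwval]
      exact fun hh => keyw a ha1 ha2 ha3 hadj.symm' hh.symm
    · rw [hcval b hb1 hb2 hb3]
      exact keyS a b ⟨ha1, ha2, ha3⟩ ⟨hb1, hb2, hb3⟩ hadj
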